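/- Let β > 2, γ > -1, and K > 0. Suppose a random variable S satisfies E|S|^p ≤ K · (β - p)^{-γ-1} for all p ∈ [2, β). Then there is a constant C = C(β, γ, K) such that P(|S| > u) ≤ C · u^{-β} (ln u)^{γ+1} for all u ≥ e. -/

import Mathlib

open MeasureTheory Real

theorem stmt_6 {Ω : Type*} [MeasurableSpace Ω] (μ : Measure Ω) [IsProbabilityMeasure μ]
    (S : Ω → ℝ) (hS : Measurable S) (β γ K : ℝ) (hβ : 2 < β) (hγ : -1 < γ) (hK : 0 < K)
    (hmom : ∀ p : ℝ, 2 ≤ p → p < β →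
      ∫⁻ ω, ENNReal.ofReal (|S ω| ^ p) ∂μ ≤ ENNReal.ofReal (K * (β - p) ^ (-γ - 1))) :
    ∃ C > (0 : ℝ), ∀ u : ℝ, Real.exp 1 ≤ u →
      (μ {ω | u < |S ω|}).toReal ≤ C * u ^ (-β) * Real.log u ^ (γ + 1) := by
  have hγ1 : 0 < γ + 1 := by linarith
  set L : ℝ := (γ + 1) / (β - 2) with hL
  have hL0 : 0 < L := div_pos hγ1 (by linarith)
  have hA : 0 < (γ + 1) ^ (-γ - 1) := Real.rpow_pos_of_pos hγ1 _
  set C : ℝ := Real.exp (β * L) + K * Real.exp (γ + 1) * (γ + 1) ^ (-γ - 1) with hC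
  have hCE : Real.exp (β * L) ≤ C := by
    have : 0 < K * Real.exp (γ + 1) * (γ + 1) ^ (-γ - 1) := by positivity
    linarith
  have hC0 : 0 < C := lt_of_lt_of_le (Real.exp_pos _) hCE
  refine ⟨C, hC0, fun u hu => ?_⟩
  have hu0 : 0 < u := lt_of_lt_of_le (Real.exp_pos 1) hu
  set t : ℝ := Real.log u with htdef
  have ht1 : 1 ≤ t := by
    have := Real.log_le_log (Real.exp_pos 1) hu
    rwa [Real.log_exp] at this
  have ht0 : 0 < t := lt_of_lt_of_le one_pos ht1
  have hub : u ^ (-β) = Real.exp (-(t * β)) := by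
    rw [Real.rpow_def_of_pos hu0]; ring_nf; rw [htdef]; ring_nf
  have hT0 : (0:ℝ) < t ^ (γ + 1) := Real.rpow_pos_of_pos ht0 _
  rcases le_or_gt L t with hcase | hcase
  · -- big u: Markov with p = β - (γ+1)/t
    set p : ℝ := β - (γ + 1) / t with hp
    have hfrac : 0 < (γ + 1) / t := div_pos hγ1 ht0
    have hp2 : 2 ≤ p := by
      have h1 : γ + 1 ≤ t * (β - 2) := (div_le_iff₀ (by linarith)).mp hcase
      have : (γ + 1) / t ≤ β - 2 := (div_le_iff₀ ht0).mpr (by linarith)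
      simp only [hp]; linarith
    have hpβ : p < β := by simp only [hp]; linarith
    have hp0 : 0 ≤ p := by linarith
    have hβp : β - p = (γ + 1) / t := by simp only [hp]; ring
    have hup : u ^ p = Real.exp (t * β) / Real.exp (γ + 1) := by
      rw [Real.rpow_def_of_pos hu0, ← htdef, ← Real.exp_sub]
      congr 1
      field_simp [hp]
      have h : t * ((γ + 1) / t) = γ + 1 := by field_simp
      linear_combination -t * hβp - h
    have hup0 : 0 < u ^ p := Real.rpow_pos_of_pos hu0 _
    -- Markov
    have markov : μ {ω | u < |S ω|} ≤
        ENNReal.ofReal (K * (β - p) ^ (-γ - 1)) / ENNReal.ofReal (u ^ p) := by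
      have hsub : μ {ω | u < |S ω|} ≤
          μ {ω | ENNReal.ofReal (u ^ p) ≤ ENNReal.ofReal (|S ω| ^ p)} := by
        apply measure_mono
        intro ω hω
        simp only [Set.mem_setOf_eq] at hω ⊢
        exact ENNReal.ofReal_le_ofReal (Real.rpow_le_rpow hu0.le hω.le hp0)
      refine hsub.trans ?_
      have hmble : AEMeasurable (fun ω => ENNReal.ofReal (|S ω| ^ p)) μ :=
        ((hS.abs.pow_const p).ennreal_ofReal).aemeasurable
      refine (meas_ge_le_lintegral_div hmble ?_ ENNReal.ofReal_ne_top).trans ?_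
      · exact ne_of_gt (ENNReal.ofReal_pos.mpr hup0)
      · exact ENNReal.div_le_div_right (hmom p hp2 hpβ) _
    have hrhs0 : 0 ≤ K * (β - p) ^ (-γ - 1) / u ^ p :=
      div_nonneg (mul_nonneg hK.le (Real.rpow_nonneg (by linarith) _)) hup0.le
    have htoReal : (μ {ω | u < |S ω|}).toReal ≤ K * (β - p) ^ (-γ - 1) / u ^ p := by
      have heq : ENNReal.ofReal (K * (β - p) ^ (-γ - 1)) / ENNReal.ofReal (u ^ p)
          = ENNReal.ofReal (K * (β - p) ^ (-γ - 1) / u ^ p) := by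
        rw [ENNReal.ofReal_div_of_pos hup0]
      rw [heq] at markov
      calc (μ {ω | u < |S ω|}).toReal
          ≤ (ENNReal.ofReal (K * (β - p) ^ (-γ - 1) / u ^ p)).toReal :=
            ENNReal.toReal_mono ENNReal.ofReal_ne_top markov
        _ = K * (β - p) ^ (-γ - 1) / u ^ p := ENNReal.toReal_ofReal hrhs0
    refine htoReal.trans ?_
    -- real computation
    have hpow : (β - p) ^ (-γ - 1) = (γ + 1) ^ (-γ - 1) * t ^ (γ + 1) := by
      rw [hβp, Real.div_rpow hγ1.le ht0.le]
      have : t ^ (-γ - 1) = (t ^ (γ + 1))⁻¹ := by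
        rw [show -γ - 1 = -(γ + 1) by ring, Real.rpow_neg ht0.le]
      rw [this, div_eq_mul_inv, inv_inv]
    rw [hpow, hup, hub]
    have hE : 0 < Real.exp (t * β) := Real.exp_pos _
    have hexp : Real.exp (-(t * β)) = (Real.exp (t * β))⁻¹ := by
      rw [← Real.exp_neg]
    rw [hexp]
    rw [div_div_eq_mul_div]
    rw [div_le_iff₀ hE]
    have key : K * Real.exp (γ + 1) * (γ + 1) ^ (-γ - 1) ≤ C := by
      have : 0 < Real.exp (β * L) := Real.exp_pos _
      linarith
    calc K * ((γ + 1) ^ (-γ - 1) * t ^ (γ + 1)) * Real.exp (γ + 1)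
        = (K * Real.exp (γ + 1) * (γ + 1) ^ (-γ - 1)) * t ^ (γ + 1) := by ring
      _ ≤ C * t ^ (γ + 1) := by
          exact mul_le_mul_of_nonneg_right key hT0.le
      _ = C * (Real.exp (t * β))⁻¹ * t ^ (γ + 1) * Real.exp (t * β) := by
          field_simp
  · -- small u: use measure ≤ 1
    have hle1 : (μ {ω | u < |S ω|}).toReal ≤ 1 := by
      have := prob_le_one (μ := μ) (s := {ω | u < |S ω|})
      calc (μ {ω | u < |S ω|}).toReal ≤ (1 : ENNReal).toReal :=
            ENNReal.toReal_mono ENNReal.one_ne_top this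
        _ = 1 := by simp
    refine hle1.trans ?_
    rw [hub]
    have hT1 : 1 ≤ t ^ (γ + 1) := Real.one_le_rpow ht1 hγ1.le
    have hx : Real.exp (-(β * L)) ≤ Real.exp (-(t * β)) := by
      apply Real.exp_le_exp.mpr
      nlinarith
    have h1 : 1 ≤ C * Real.exp (-(t * β)) := by
      calc (1:ℝ) = Real.exp (β * L) * Real.exp (-(β * L)) := by
            rw [← Real.exp_add]; simp
        _ ≤ C * Real.exp (-(t * β)) :=
            mul_le_mul hCE hx (Real.exp_pos _).le hC0.le
    calc (1:ℝ) = 1 * 1 := by ring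
      _ ≤ (C * Real.exp (-(t * β))) * t ^ (γ + 1) := mul_le_mul h1 hT1 one_pos.le (by positivity)
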